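/- Let C ∈ (-1, 0) and define κ_s(z) = (1 - z^2 + √(z^4 + 2(2C^2-1)z^2 + 1))/(2Cz), where √ denotes the principal complex square root. Then κ_s is well defined and complex-differentiable in a neighborhood of z = -1 and of z = 1 (the radicand equals 4C^2 > 0 at z = ±1), and κ_s(1) = -1, κ_s(-1) = 1, and the complex derivative of κ_s at z = -1 equals -1/C. -/

import Mathlib

open Real Complex Filter Topology

/-- For `C ∈ (-1,0)`, the stable root
`κ_s(z) = (1 - z² + √(z⁴ + 2(2C²-1)z² + 1))/(2Cz)` (principal complex square root)
is complex-differentiable in a neighborhood of `z = ±1` (the radicand equals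
`4C² > 0` at `z = ±1`), with `κ_s(1) = -1`, `κ_s(-1) = 1`, and `κ_s'(-1) = -1/C`. -/
theorem stable_root_near_pm_one (C : ℝ) (hC : C ∈ Set.Ioo (-1 : ℝ) 0) :
    let ks : ℂ → ℂ := fun z =>
      (1 - z ^ 2 + (z ^ 4 + 2 * (2 * (C : ℂ) ^ 2 - 1) * z ^ 2 + 1) ^ ((1 : ℂ) / 2)) /
        (2 * (C : ℂ) * z)
    ((1 : ℂ) ^ 4 + 2 * (2 * (C : ℂ) ^ 2 - 1) * (1 : ℂ) ^ 2 + 1 = 4 * (C : ℂ) ^ 2) ∧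
    ((-1 : ℂ) ^ 4 + 2 * (2 * (C : ℂ) ^ 2 - 1) * (-1 : ℂ) ^ 2 + 1 = 4 * (C : ℂ) ^ 2) ∧
    (0 < 4 * C ^ 2) ∧
    (∀ᶠ z in 𝓝 (1 : ℂ), DifferentiableAt ℂ ks z) ∧
    (∀ᶠ z in 𝓝 (-1 : ℂ), DifferentiableAt ℂ ks z) ∧
    ks 1 = -1 ∧ ks (-1) = 1 ∧ deriv ks (-1) = -1 / (C : ℂ) := by
  intro ks
  obtain ⟨hC1, hC0⟩ := hC
  have hCne : C ≠ 0 := ne_of_lt hC0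
  have hCneC : (C : ℂ) ≠ 0 := by exact_mod_cast hCne
  -- radicand polynomial
  set f : ℂ → ℂ := fun z => z ^ 4 + 2 * (2 * (C : ℂ) ^ 2 - 1) * z ^ 2 + 1 with hf
  have hfdiff : ∀ z : ℂ, DifferentiableAt ℂ f z := by
    intro z
    fun_prop
  have hfcont : Continuous f := by fun_prop
  have hf1 : f 1 = 4 * (C : ℂ) ^ 2 := by simp only [hf]; ring
  have hfm1 : f (-1) = 4 * (C : ℂ) ^ 2 := by simp only [hf]; ring
  -- key cpow value
  have h0 : (0:ℝ) ≤ 4 * C ^ 2 := by positivity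
  have key : ((4 : ℂ) * (C : ℂ) ^ 2) ^ ((1:ℂ)/2) = -2 * (C : ℂ) := by
    have h1 : ((4:ℂ) * (C:ℂ)^2) = ((4*C^2 : ℝ) : ℂ) := by push_cast; ring
    rw [h1, show ((1:ℂ)/2) = (((1/2 : ℝ) : ℝ):ℂ) by norm_num,
      ← Complex.ofReal_cpow h0, ← Real.sqrt_eq_rpow,
      show (4*C^2 : ℝ) = (-2*C)^2 by ring, Real.sqrt_sq (by nlinarith : (0:ℝ) ≤ -2*C)]
    push_cast; ring
  -- eventual differentiability
  have hev : ∀ a : ℂ, a ≠ 0 → f a = 4 * (C:ℂ)^2 → ∀ᶠ z in 𝓝 a, DifferentiableAt ℂ ks z := by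
    intro a hane ha
    have hopen : IsOpen {z : ℂ | 0 < (f z).re ∧ z ≠ 0} := by
      apply IsOpen.inter
      · exact isOpen_lt continuous_const (Complex.continuous_re.comp hfcont)
      · exact isOpen_ne
    have hmem : a ∈ {z : ℂ | 0 < (f z).re ∧ z ≠ 0} := by
      refine ⟨?_, hane⟩
      rw [ha]
      have : ((4:ℂ) * (C:ℂ)^2) = ((4*C^2 : ℝ) : ℂ) := by push_cast; ring
      rw [this, Complex.ofReal_re]
      positivity
    filter_upwards [hopen.mem_nhds hmem] with z hz
    have hd1 : DifferentiableAt ℂ (fun z => (f z) ^ ((1:ℂ)/2)) z :=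
      (((hfdiff z).hasDerivAt).cpow_const (Complex.mem_slitPlane_iff.mpr (Or.inl hz.1))).differentiableAt
    have hden : (2 * (C:ℂ) * z) ≠ 0 := by
      simp [hCneC, hz.2]
    exact DifferentiableAt.div (by fun_prop) (by fun_prop) hden
  refine ⟨by ring, by ring, by positivity, hev 1 one_ne_zero hf1, hev (-1) (by norm_num) hfm1, ?_, ?_, ?_⟩
  · show (1 - 1 ^ 2 + f 1 ^ ((1:ℂ)/2)) / (2 * (C:ℂ) * 1) = -1
    rw [hf1, key]
    field_simp
    ring
  · show (1 - (-1) ^ 2 + f (-1) ^ ((1:ℂ)/2)) / (2 * (C:ℂ) * (-1)) = 1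
    rw [hfm1, key]
    field_simp
    ring
  · -- derivative at -1
    have hfderiv : HasDerivAt f (-8 * (C:ℂ)^2) (-1) := by
      have h1 : HasDerivAt (fun z : ℂ => z ^ 4 + 2 * (2 * (C : ℂ) ^ 2 - 1) * z ^ 2 + 1)
          ((4:ℂ) * (-1)^3 + 2 * (2 * (C:ℂ)^2 - 1) * (2 * (-1)^1) + 0) (-1) := by
        exact (((hasDerivAt_pow 4 (-1)).add
          (((hasDerivAt_pow 2 (-1:ℂ)).const_mul (2 * (2 * (C:ℂ)^2 - 1))))).add_const 1).congr_deriv (by push_cast; ring)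
      convert h1 using 1
      ring
    have hkey2 : ((4:ℂ) * (C:ℂ)^2) ^ ((1:ℂ)/2 - 1) = (-2 * (C:ℂ))⁻¹ := by
      rw [show ((1:ℂ)/2 - 1) = -((1:ℂ)/2) by ring, Complex.cpow_neg, key]
    have hrepos : 0 < (f (-1)).re := by
      rw [hfm1]
      have : ((4:ℂ) * (C:ℂ)^2) = ((4*C^2 : ℝ) : ℂ) := by push_cast; ring
      rw [this, Complex.ofReal_re]; positivity
    have hg : HasDerivAt (fun z => (f z) ^ ((1:ℂ)/2))
        (((1:ℂ)/2) * (f (-1)) ^ ((1:ℂ)/2 - 1) * (-8 * (C:ℂ)^2)) (-1) :=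
      hfderiv.cpow_const (Complex.mem_slitPlane_iff.mpr (Or.inl hrepos))
    have hnum : HasDerivAt (fun z : ℂ => 1 - z ^ 2 + (f z) ^ ((1:ℂ)/2))
        (2 + ((1:ℂ)/2) * (f (-1)) ^ ((1:ℂ)/2 - 1) * (-8 * (C:ℂ)^2)) (-1) := by
      have hp : HasDerivAt (fun z : ℂ => 1 - z ^ 2) (-(2 * (-1:ℂ)^1)) (-1) :=
        ((hasDerivAt_pow 2 (-1:ℂ)).const_sub 1)
      have := hp.add hg
      exact this.congr_deriv (by ring)
    have hden : HasDerivAt (fun z : ℂ => 2 * (C:ℂ) * z) (2 * (C:ℂ)) (-1) := by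
      simpa using (hasDerivAt_id (-1:ℂ)).const_mul (2 * (C:ℂ))
    have hdenne : (2 * (C:ℂ) * (-1)) ≠ 0 := by simp [hCneC]
    have hks : HasDerivAt ks
        (((2 + ((1:ℂ)/2) * (f (-1)) ^ ((1:ℂ)/2 - 1) * (-8 * (C:ℂ)^2)) * (2 * (C:ℂ) * (-1))
          - (1 - (-1) ^ 2 + (f (-1)) ^ ((1:ℂ)/2)) * (2 * (C:ℂ))) / (2 * (C:ℂ) * (-1)) ^ 2)
        (-1) := hnum.div hden hdenne
    rw [hks.deriv]
    rw [hfm1, hkey2, key]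
    have h2C : (-2 * (C:ℂ)) ≠ 0 := by simp [hCneC]
    field_simp
    ring
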